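/- In the half-plane triangular grid S generated by nonnegative combinations of i and j, let d = ⌊(ℓ_max+1)/√(c+1)⌋, let R be the d×d square of vertices {v + αi + βj : 0 ≤ α, β < d}, and let D = {v + αi + βj : 0 ≤ α, β < d + ℓ_max} \ R. Then for every nonempty rectangle R' = {v + αi + βj : 0 ≤ α < a, 0 ≤ β < b} with 1 ≤ a, b ≤ d, the number of vertices of D within graph distance ℓ_max of R' is at least c·|R'| = c·a·b. -/

import Mathlib

/-- The half-plane (quadrant) triangular grid `S` generated from `v` by nonnegative
combinations of `i = (1,0)` and `j = (0,1)`: the triangular grid restricted to the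
vertices `v + αi + βj` with `α, β ≥ 0` (paths must stay within the quadrant). -/
def quadGraph (v : ℤ × ℤ) : SimpleGraph (ℤ × ℤ) where
  Adj u w := ((u.1 - w.1 = 1 ∧ u.2 - w.2 = 0) ∨ (u.1 - w.1 = -1 ∧ u.2 - w.2 = 0) ∨
    (u.1 - w.1 = 0 ∧ u.2 - w.2 = 1) ∨ (u.1 - w.1 = 0 ∧ u.2 - w.2 = -1) ∨
    (u.1 - w.1 = 1 ∧ u.2 - w.2 = 1) ∨ (u.1 - w.1 = -1 ∧ u.2 - w.2 = -1)) ∧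
    v.1 ≤ u.1 ∧ v.2 ≤ u.2 ∧ v.1 ≤ w.1 ∧ v.2 ≤ w.2
  symm := ⟨by intro u w h; omega⟩
  loopless := ⟨by intro u h; omega⟩

/-- The rectangle `{v + αi + βj : 0 ≤ α < a, 0 ≤ β < b}`. -/
def rect (v : ℤ × ℤ) (a b : ℕ) : Set (ℤ × ℤ) :=
  {p | v.1 ≤ p.1 ∧ p.1 < v.1 + a ∧ v.2 ≤ p.2 ∧ p.2 < v.2 + b}

lemma quad_adj (v : ℤ × ℤ) (x y x' y' : ℤ)
    (h : (x - x' = 1 ∧ y - y' = 0) ∨ (x - x' = -1 ∧ y - y' = 0) ∨ (x - x' = 0 ∧ y - y' = 1) ∨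
      (x - x' = 0 ∧ y - y' = -1) ∨ (x - x' = 1 ∧ y - y' = 1) ∨ (x - x' = -1 ∧ y - y' = -1))
    (h1 : v.1 ≤ x) (h2 : v.2 ≤ y) (h3 : v.1 ≤ x') (h4 : v.2 ≤ y') :
    (quadGraph v).Adj (x, y) (x', y') := ⟨h, h1, h2, h3, h4⟩

lemma quad_walk_exists (v : ℤ × ℤ) : ∀ n : ℕ, ∀ p q : ℤ × ℤ, v.1 ≤ p.1 → v.2 ≤ p.2 →
    p.1 ≤ q.1 → p.2 ≤ q.2 → q.1 - p.1 ≤ n → q.2 - p.2 ≤ n →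
    ∃ w : (quadGraph v).Walk p q, w.length ≤ n := by
  intro n
  induction n with
  | zero =>
    intro p q h1 h2 h3 h4 h5 h6
    have hq : p = q := by
      have : p.1 = q.1 ∧ p.2 = q.2 := by push_cast at h5 h6; omega
      exact Prod.ext this.1 this.2
    subst hq
    exact ⟨SimpleGraph.Walk.nil, by simp⟩
  | succ n ih =>
    intro p q h1 h2 h3 h4 h5 h6
    by_cases hpq : p = q
    · subst hpq; exact ⟨SimpleGraph.Walk.nil, by simp⟩
    · have hne : p.1 < q.1 ∨ p.2 < q.2 := by
        by_contra h
        push_neg at h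
        exact hpq (Prod.ext (le_antisymm h3 h.1) (le_antisymm h4 h.2))
      set p' : ℤ × ℤ := (p.1 + (if p.1 < q.1 then 1 else 0),
        p.2 + (if p.2 < q.2 then 1 else 0)) with hp'
      have h1' : v.1 ≤ p'.1 := by simp only [hp']; split_ifs <;> omega
      have h2' : v.2 ≤ p'.2 := by simp only [hp']; split_ifs <;> omega
      have hadj : (quadGraph v).Adj p p' :=
        quad_adj v p.1 p.2 p'.1 p'.2
          (by simp only [hp']; split_ifs <;> omega) h1 h2 h1' h2'
      have h3' : p'.1 ≤ q.1 := by simp only [hp']; split_ifs <;> omega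
      have h4' : p'.2 ≤ q.2 := by simp only [hp']; split_ifs <;> omega
      have h5' : q.1 - p'.1 ≤ n := by
        simp only [hp']; push_cast at h5 ⊢; split_ifs <;> omega
      have h6' : q.2 - p'.2 ≤ n := by
        simp only [hp']; push_cast at h6 ⊢; split_ifs <;> omega
      obtain ⟨w, hw⟩ := ih p' q h1' h2' h3' h4' h5' h6'
      exact ⟨SimpleGraph.Walk.cons hadj w, by simp; omega⟩

lemma rect_eq_coe (v : ℤ × ℤ) (a b : ℕ) :
    rect v a b = ↑(Finset.Ico v.1 (v.1 + a) ×ˢ Finset.Ico v.2 (v.2 + b)) := by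
  ext p
  simp [rect, Finset.mem_product, and_assoc]

lemma rect_finite (v : ℤ × ℤ) (a b : ℕ) : (rect v a b).Finite := by
  rw [rect_eq_coe]; exact (Finset.Ico v.1 (v.1 + a) ×ˢ Finset.Ico v.2 (v.2 + b)).finite_toSet

lemma rect_ncard (v : ℤ × ℤ) (a b : ℕ) : (rect v a b).ncard = a * b := by
  rw [rect_eq_coe, Set.ncard_coe_finset, Finset.card_product, Int.card_Ico, Int.card_Ico]
  simp

/-- Expansion in the quadrant: with `d = ⌊(ℓ_max+1)/√(c+1)⌋`, `R = rect v d d` and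
`D = rect v (d+ℓ_max) (d+ℓ_max) \ R`, every rectangle `R' = rect v a b` with
`1 ≤ a, b ≤ d` has at least `c·a·b` vertices of `D` within graph distance `ℓ_max`
of it (distance in the quadrant graph). -/
theorem quadrant_expansion (c lmax : ℕ) (hc : 0 < c) (hlmax : 0 < lmax)
    (d : ℕ) (hd : d = ⌊((lmax : ℝ) + 1) / Real.sqrt ((c : ℝ) + 1)⌋₊)
    (v : ℤ × ℤ) (a b : ℕ) (ha1 : 1 ≤ a) (had : a ≤ d) (hb1 : 1 ≤ b) (hbd : b ≤ d) :
    c * a * b ≤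
      ({u | u ∈ rect v (d + lmax) (d + lmax) \ rect v d d ∧
        ∃ w ∈ rect v a b, (quadGraph v).dist w u ≤ lmax}).ncard := by
  -- key numeric inequality: (c+1) * d^2 ≤ (lmax+1)^2
  have hs : (0:ℝ) < Real.sqrt ((c:ℝ) + 1) := Real.sqrt_pos.mpr (by positivity)
  have hdle : (d : ℝ) ≤ ((lmax : ℝ) + 1) / Real.sqrt ((c : ℝ) + 1) := by
    rw [hd]; exact Nat.floor_le (by positivity)
  have hmul : (d : ℝ) * Real.sqrt ((c:ℝ) + 1) ≤ (lmax : ℝ) + 1 := by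
    rw [← le_div_iff₀ hs]; exact hdle
  have hsq : ((c:ℝ) + 1) * d * d ≤ ((lmax:ℝ) + 1) * ((lmax:ℝ) + 1) := by
    have h2 := mul_le_mul hmul hmul (by positivity) (by positivity)
    have h3 : Real.sqrt ((c:ℝ) + 1) * Real.sqrt ((c:ℝ) + 1) = (c:ℝ) + 1 :=
      Real.mul_self_sqrt (by positivity)
    nlinarith [h2, h3]
  have hkey : (c + 1) * d * d ≤ (lmax + 1) * (lmax + 1) := by
    have : (((c + 1) * d * d : ℕ) : ℝ) ≤ (((lmax + 1) * (lmax + 1) : ℕ) : ℝ) := by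
      push_cast; nlinarith [hsq]
    exact_mod_cast this
  have hdlm : d ≤ lmax + 1 := by
    by_contra h
    push_neg at h
    have h2 : lmax + 2 ≤ d := h
    nlinarith [Nat.mul_le_mul h2 h2, hc, hkey]
  -- the witness set T
  set T : Set (ℤ × ℤ) := rect v (a + lmax) (b + lmax) \ rect v d d with hT
  have hsub_small : rect v d d ⊆ rect v (a + lmax) (b + lmax) := by
    intro p hp
    simp only [rect, Set.mem_setOf_eq] at hp ⊢
    push_cast at hp ⊢
    omega
  have hsub_big : rect v (a + lmax) (b + lmax) ⊆ rect v (d + lmax) (d + lmax) := by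
    intro p hp
    simp only [rect, Set.mem_setOf_eq] at hp ⊢
    push_cast at hp ⊢
    omega
  have hTsub : T ⊆ {u | u ∈ rect v (d + lmax) (d + lmax) \ rect v d d ∧
      ∃ w ∈ rect v a b, (quadGraph v).dist w u ≤ lmax} := by
    rintro u ⟨hu1, hu2⟩
    refine ⟨⟨hsub_big hu1, hu2⟩, ?_⟩
    simp only [rect, Set.mem_setOf_eq] at hu1
    set w : ℤ × ℤ := (min u.1 (v.1 + a - 1), min u.2 (v.2 + b - 1)) with hw
    have hwmem : w ∈ rect v a b := by
      simp only [rect, Set.mem_setOf_eq, hw]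
      push_cast
      constructor
      · omega
      constructor
      · have : (1:ℤ) ≤ a := by exact_mod_cast ha1
        omega
      constructor
      · omega
      · have : (1:ℤ) ≤ b := by exact_mod_cast hb1
        omega
    refine ⟨w, hwmem, ?_⟩
    have h1 : v.1 ≤ w.1 := by
      simp only [hw]
      have : (1:ℤ) ≤ a := by exact_mod_cast ha1
      push_cast; omega
    have h2 : v.2 ≤ w.2 := by
      simp only [hw]
      have : (1:ℤ) ≤ b := by exact_mod_cast hb1
      push_cast; omega
    have h3 : w.1 ≤ u.1 := by simp only [hw]; push_cast; omega
    have h4 : w.2 ≤ u.2 := by simp only [hw]; push_cast; omega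
    have h5 : u.1 - w.1 ≤ (lmax : ℤ) := by
      simp only [hw]; push_cast at hu1 ⊢; omega
    have h6 : u.2 - w.2 ≤ (lmax : ℤ) := by
      simp only [hw]; push_cast at hu1 ⊢; omega
    obtain ⟨p, hp⟩ := quad_walk_exists v lmax w u h1 h2 h3 h4 (by exact_mod_cast h5)
      (by exact_mod_cast h6)
    exact le_trans (SimpleGraph.dist_le p) hp
  have hbigfin : ({u | u ∈ rect v (d + lmax) (d + lmax) \ rect v d d ∧
      ∃ w ∈ rect v a b, (quadGraph v).dist w u ≤ lmax}).Finite := by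
    apply (rect_finite v (d + lmax) (d + lmax)).subset
    rintro u ⟨⟨hu, _⟩, _⟩
    exact hu
  have hTcard : T.ncard = (a + lmax) * (b + lmax) - d * d := by
    rw [hT, Set.ncard_diff hsub_small (rect_finite v d d),
      rect_ncard, rect_ncard]
  have hle := Set.ncard_le_ncard hTsub hbigfin
  rw [hTcard] at hle
  refine le_trans ?_ hle
  have hdd : d * d ≤ (a + lmax) * (b + lmax) := by nlinarith
  have : c * a * b + d * d ≤ (a + lmax) * (b + lmax) := by
    have h1 : c * a * b ≤ c * d * d := by
      apply Nat.mul_le_mul (Nat.mul_le_mul_left c had) hbd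
    have h2 : (lmax + 1) * (lmax + 1) ≤ (a + lmax) * (b + lmax) := by nlinarith
    calc c * a * b + d * d ≤ c * d * d + d * d := by omega
      _ = (c + 1) * d * d := by ring
      _ ≤ (lmax + 1) * (lmax + 1) := hkey
      _ ≤ (a + lmax) * (b + lmax) := h2
  omega
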